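/- Let G be an interval graph with n vertices, let k ≥ 2 be the maximum clique size of G, and suppose that in the left ordering of G every vertex other than the last is adjacent to its successor. Then there is a set S of at least n^{1/(k−1)} vertices of G such that, in the induced left ordering of S, every vertex of S other than the last is adjacent in G to its successor, and no vertex of S other than the first and the last of the induced left ordering is simplicial in the induced subgraph G[S]. -/

import Mathlib

open SimpleGraph

/-- `l, r` form an interval representation of `G`: each vertex `v` corresponds to the
interval `[l v, r v]`, all `2n` endpoints are pairwise distinct, and two distinct
vertices are adjacent exactly when their intervals intersect. -/
def IsIntervalRep {V : Type} (G : SimpleGraph V) (l r : V → ℝ) : Prop :=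
  (∀ v, l v ≤ r v) ∧
  (∀ v w, l v = l w → v = w) ∧
  (∀ v w, r v = r w → v = w) ∧
  (∀ v w, l v ≠ r w) ∧
  (∀ v w, v ≠ w → (G.Adj v w ↔ l v ≤ r w ∧ l w ≤ r v))

/-- The maximum clique size of `G` is `k`. -/
def MaxCliqueSize {V : Type} (G : SimpleGraph V) (k : ℕ) : Prop :=
  (∃ S : Finset V, G.IsNClique k S) ∧ ∀ (m : ℕ) (S : Finset V), G.IsNClique m S → m ≤ k

/-- In the left ordering (ordering by `l`) induced on `S`, every vertex of `S` other
than the last is adjacent to its successor: any two elements of `S` that are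
consecutive in the left ordering of `S` are adjacent in `G`. -/
def ConsecAdjOn {V : Type} (G : SimpleGraph V) (l : V → ℝ) (S : Set V) : Prop :=
  ∀ v ∈ S, ∀ w ∈ S, l v < l w → (∀ u ∈ S, ¬(l v < l u ∧ l u < l w)) → G.Adj v w

namespace IntervalAux

variable {V : Type} (G : SimpleGraph V) (l r : V → ℝ)

/-- `w` is the successor of `v` in the left ordering of `X`. -/
def Consec (X : Finset V) (v w : V) : Prop :=
  v ∈ X ∧ w ∈ X ∧ l v < l w ∧ ∀ u ∈ X, ¬ (l v < l u ∧ l u < l w)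

/-- Snake: consecutive elements adjacent, two-apart elements nonadjacent. -/
def SnakeOn (S : Finset V) : Prop :=
  ConsecAdjOn G l ↑S ∧
  ∀ v u w : V, Consec l S v u → Consec l S u w → ¬ G.Adj v w

/-- Greedy chain property. -/
def GChain (A X : Finset V) : Prop :=
  X ⊆ A ∧ ∀ v w : V, Consec l X v w → G.Adj v w ∧ ∀ u ∈ A, G.Adj v u → l u ≤ l w

lemma snake_of_chain {A X : Finset V} (h : GChain G l A X) : SnakeOn G l X := by
  constructor
  · intro v hv w hw hlt hbtw
    exact (h.2 v w ⟨Finset.mem_coe.mp hv, Finset.mem_coe.mp hw, hlt,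
      fun u hu => hbtw u (Finset.mem_coe.mpr hu)⟩).1
  · intro v u w h1 h2 hadj
    have := (h.2 v u h1).2 w (h.1 h2.2.1) hadj
    exact absurd this (not_le.mpr h2.2.2.1)

lemma chain_from (hlinj : ∀ v w, l v = l w → v = w)
    (A : Finset V) (hA : ConsecAdjOn G l ↑A)
    (top : V) (htopA : top ∈ A) (htop : ∀ a ∈ A, l a ≤ l top) :
    ∀ N : ℕ, ∀ x ∈ A, (A.filter (fun a => l x < l a)).card ≤ N →
      ∃ X : Finset V, X ⊆ A ∧ x ∈ X ∧ top ∈ X ∧ (∀ y ∈ X, l x ≤ l y) ∧ GChain G l A X := by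
  classical
  intro N
  induction N with
  | zero =>
    intro x hx hcard
    have hxt : x = top := by
      by_contra hne
      have h1 : l x < l top := lt_of_le_of_ne (htop x hx) (fun h => hne (hlinj _ _ h))
      have h2 : top ∈ A.filter (fun a => l x < l a) := Finset.mem_filter.mpr ⟨htopA, h1⟩
      have := Finset.card_pos.mpr ⟨top, h2⟩
      omega
    refine ⟨{x}, Finset.singleton_subset_iff.mpr hx, Finset.mem_singleton_self x,
      by rw [← hxt]; exact Finset.mem_singleton_self x, fun y hy => by
        rw [Finset.mem_singleton.mp hy], Finset.singleton_subset_iff.mpr hx, ?_⟩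
    intro v w hc
    have hv := Finset.mem_singleton.mp hc.1
    have hw := Finset.mem_singleton.mp hc.2.1
    subst hv; subst hw
    exact absurd hc.2.2.1 (lt_irrefl _)
  | succ N ih =>
    intro x hx hcard
    by_cases hle : (A.filter (fun a => l x < l a)).card ≤ N
    · exact ih x hx hle
    have hne : (A.filter (fun a => l x < l a)).Nonempty := by
      rw [← Finset.card_pos]; omega
    obtain ⟨sc, hscmem, hscmin⟩ := Finset.exists_min_image _ l hne
    have hscA : sc ∈ A := (Finset.mem_filter.mp hscmem).1
    have hxsc : l x < l sc := (Finset.mem_filter.mp hscmem).2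
    have hadjsc : G.Adj x sc := by
      apply hA x (Finset.mem_coe.mpr hx) sc (Finset.mem_coe.mpr hscA) hxsc
      intro u hu h
      have hu' : u ∈ A.filter (fun a => l x < l a) :=
        Finset.mem_filter.mpr ⟨Finset.mem_coe.mp hu, h.1⟩
      exact absurd (hscmin u hu') (not_le.mpr h.2)
    have hscNbr : sc ∈ A.filter (fun a => G.Adj x a) :=
      Finset.mem_filter.mpr ⟨hscA, hadjsc⟩
    obtain ⟨w, hwN, hwmax⟩ := Finset.exists_max_image _ l ⟨sc, hscNbr⟩
    have hwA : w ∈ A := (Finset.mem_filter.mp hwN).1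
    have hadjxw : G.Adj x w := (Finset.mem_filter.mp hwN).2
    have hxw : l x < l w := lt_of_lt_of_le hxsc (hwmax sc hscNbr)
    have hss : A.filter (fun a => l w < l a) ⊂ A.filter (fun a => l x < l a) := by
      constructor
      · intro a ha
        have := Finset.mem_filter.mp ha
        exact Finset.mem_filter.mpr ⟨this.1, lt_trans hxw this.2⟩
      · intro hsub
        have hw1 : w ∈ A.filter (fun a => l x < l a) := Finset.mem_filter.mpr ⟨hwA, hxw⟩
        have hw2 := Finset.mem_filter.mp (hsub hw1)
        exact absurd hw2.2 (lt_irrefl _)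
    have hcard' : (A.filter (fun a => l w < l a)).card ≤ N := by
      have := Finset.card_lt_card hss
      omega
    obtain ⟨X', hX'A, hwX', htopX', hlb, hchain⟩ := ih w hwA hcard'
    refine ⟨insert x X', Finset.insert_subset hx hX'A, Finset.mem_insert_self x X',
      Finset.mem_insert_of_mem htopX', ?_, Finset.insert_subset hx hX'A, ?_⟩
    · intro y hy
      rcases Finset.mem_insert.mp hy with rfl | hy'
      · exact le_refl _
      · exact le_of_lt (lt_of_lt_of_le hxw (hlb y hy'))
    · intro v w' hc
      obtain ⟨hvX, hwX, hlt, hbtw⟩ := hc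
      rcases Finset.mem_insert.mp hvX with rfl | hvX'
      · have hww' : w' = w := by
          rcases lt_trichotomy (l w') (l w) with h | h | h
          · have hw'ne : w' ≠ v := fun h' => absurd hlt (h' ▸ lt_irrefl _)
            have hw'X' : w' ∈ X' := (Finset.mem_insert.mp hwX).resolve_left hw'ne
            exact absurd (hlb w' hw'X') (not_le.mpr h)
          · exact hlinj _ _ h
          · exact absurd ⟨hxw, h⟩ (hbtw w (Finset.mem_insert_of_mem hwX'))
        subst hww'
        exact ⟨hadjxw, fun u hu hadj => hwmax u (Finset.mem_filter.mpr ⟨hu, hadj⟩)⟩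
      · have hw'X' : w' ∈ X' := by
          have hne : w' ≠ x := by
            intro h'
            subst h'
            exact absurd (lt_of_le_of_lt (hlb v hvX') hlt) (not_lt.mpr (le_of_lt hxw))
          exact (Finset.mem_insert.mp hwX).resolve_left hne
        exact hchain.2 v w' ⟨hvX', hw'X', hlt,
          fun u hu => hbtw u (Finset.mem_insert_of_mem hu)⟩

lemma arith (s p m t : ℕ) (hs : 1 ≤ s) (hp : p ≤ s) (hm : m ≤ s) (ht : 1 ≤ t) :
    p + (p - 1) * m ^ t ≤ s ^ (t + 1) := by
  have step1 : p + (p - 1) * m ^ t ≤ s + (s - 1) * s ^ t :=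
    add_le_add hp (Nat.mul_le_mul (by omega) (Nat.pow_le_pow_left hm t))
  refine le_trans step1 ?_
  obtain ⟨u, rfl⟩ := Nat.exists_eq_add_of_le hs
  have hle : 1 + u ≤ (1 + u) ^ t := Nat.le_self_pow (by omega) _
  calc (1 + u) + ((1 + u) - 1) * (1 + u) ^ t
      = (1 + u) + u * (1 + u) ^ t := by simp
    _ ≤ (1 + u) ^ t + u * (1 + u) ^ t := add_le_add_left hle _
    _ = (1 + u) ^ (t + 1) := by ring

lemma main (hrep : IsIntervalRep G l r) :
    ∀ k : ℕ, 1 ≤ k → ∀ A : Finset V,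
      (∀ C : Finset V, C ⊆ A → G.IsClique ↑C → C.card ≤ k) →
      ConsecAdjOn G l ↑A →
      ∃ S : Finset V, S ⊆ A ∧ SnakeOn G l S ∧ A.card ≤ S.card ^ (k - 1) := by
  classical
  obtain ⟨hlr, hlinj, hrinj, hlrne, hadj⟩ := hrep
  intro k hk
  induction k, hk using Nat.le_induction with
  | base =>
    intro A hclq hA
    have hA1 : A.card ≤ 1 := by
      by_contra h
      have h2 : 1 < A.card := by omega
      obtain ⟨a, haA, b, hbA, hab⟩ := Finset.one_lt_card.mp h2
      -- wlog l a < l b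
      have key : ∀ c d : V, c ∈ A → d ∈ A → l c < l d → False := by
        intro c d hcA hdA hcd
        obtain ⟨e, hemem, hemin⟩ := Finset.exists_min_image
          (A.filter (fun y => l c < l y)) l ⟨d, Finset.mem_filter.mpr ⟨hdA, hcd⟩⟩
        have heA : e ∈ A := (Finset.mem_filter.mp hemem).1
        have hce : l c < l e := (Finset.mem_filter.mp hemem).2
        have hadjce : G.Adj c e := by
          apply hA c (Finset.mem_coe.mpr hcA) e (Finset.mem_coe.mpr heA) hce
          intro u hu h
          exact absurd (hemin u (Finset.mem_filter.mpr ⟨Finset.mem_coe.mp hu, h.1⟩))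
            (not_le.mpr h.2)
        have hclique : G.IsClique ↑({c, e} : Finset V) := by
          rw [Finset.coe_insert, Finset.coe_singleton]
          exact (SimpleGraph.isClique_insert).mpr
            ⟨SimpleGraph.isClique_singleton _, fun b hb _ => by
              rw [Set.mem_singleton_iff.mp hb]; exact hadjce⟩
        have hcard2 : ({c, e} : Finset V).card = 2 :=
          Finset.card_pair (G.ne_of_adj hadjce)
        have := hclq {c, e} (by
          intro z hz
          rcases Finset.mem_insert.mp hz with rfl | hz
          · exact hcA
          · rw [Finset.mem_singleton.mp hz]; exact heA) hclique
        omega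
      rcases lt_trichotomy (l a) (l b) with h | h | h
      · exact key a b haA hbA h
      · exact hab (hlinj _ _ h)
      · exact key b a hbA haA h
    refine ⟨A, le_refl A, ⟨?_, ?_⟩, by simpa using hA1⟩
    · intro v hv w hw hlt _
      exfalso
      have hvw : v ≠ w := fun h => absurd hlt (h ▸ lt_irrefl _)
      have := Finset.one_lt_card.mpr ⟨v, Finset.mem_coe.mp hv, w, Finset.mem_coe.mp hw, hvw⟩
      omega
    · intro v u w h1 _ _
      have hvu : v ≠ u := fun h => absurd h1.2.2.1 (h ▸ lt_irrefl _)
      have := Finset.one_lt_card.mpr ⟨v, h1.1, u, h1.2.1, hvu⟩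
      omega
  | succ k hk1 ih =>
    intro A hclq hA
    by_cases hk1' : k = 1
    · -- level 2 : the whole of A is a snake
      subst hk1'
      refine ⟨A, le_refl A, ⟨hA, ?_⟩, by simp⟩
      intro v u w h1 h2 hadjvw
      have hadjvu : G.Adj v u := by
        apply hA v (Finset.mem_coe.mpr h1.1) u (Finset.mem_coe.mpr h1.2.1) h1.2.2.1
        intro z hz
        exact h1.2.2.2 z (Finset.mem_coe.mp hz)
      have hadjuw : G.Adj u w := by
        apply hA u (Finset.mem_coe.mpr h2.1) w (Finset.mem_coe.mpr h2.2.1) h2.2.2.1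
        intro z hz
        exact h2.2.2.2 z (Finset.mem_coe.mp hz)
      have hvu : v ≠ u := G.ne_of_adj hadjvu
      have huw : u ≠ w := G.ne_of_adj hadjuw
      have hvw : v ≠ w := G.ne_of_adj hadjvw
      have hclique : G.IsClique ↑({v, u, w} : Finset V) := by
        rw [Finset.coe_insert, Finset.coe_insert, Finset.coe_singleton]
        refine (SimpleGraph.isClique_insert).mpr ⟨(SimpleGraph.isClique_insert).mpr
          ⟨SimpleGraph.isClique_singleton _, fun b hb _ => by
            rw [Set.mem_singleton_iff.mp hb]; exact hadjuw⟩, fun b hb _ => ?_⟩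
        rcases hb with rfl | hb
        · exact hadjvu
        · rw [Set.mem_singleton_iff.mp hb]; exact hadjvw
      have hsub : ({v, u, w} : Finset V) ⊆ A := by
        intro z hz
        rcases Finset.mem_insert.mp hz with rfl | hz
        · exact h1.1
        rcases Finset.mem_insert.mp hz with rfl | hz
        · exact h1.2.1
        · rw [Finset.mem_singleton.mp hz]; exact h2.2.1
      have hcard3 : ({v, u, w} : Finset V).card = 3 := by
        rw [Finset.card_insert_of_notMem (by simp [hvu, hvw]),
          Finset.card_insert_of_notMem (by simp [huw]), Finset.card_singleton]
      have := hclq _ hsub hclique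
      omega
    · -- generic step, k ≥ 2, level k+1 ≥ 3
      have hk2 : 2 ≤ k := by omega
      rcases A.eq_empty_or_nonempty with rfl | hAne
      · exact ⟨∅, le_refl _, ⟨fun v hv => absurd hv (by simp),
          fun v u w h1 _ _ => absurd h1.1 (by simp)⟩, by simp⟩
      obtain ⟨top, htopA, htop⟩ := Finset.exists_max_image A l hAne
      obtain ⟨bot, hbotA, hbot⟩ := Finset.exists_min_image A l hAne
      obtain ⟨X, hXA, hbotX, htopX, hXlb, hchain⟩ :=
        chain_from G l hlinj A hA top htopA htop
          (A.filter (fun a => l bot < l a)).card bot hbotA (le_refl _)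
      set P : Finset V := X.erase top with hP
      have hPX : ∀ v ∈ P, v ∈ X := fun v hv => Finset.mem_of_mem_erase hv
      -- successor of each non-top chain element
      have hnxt0 : ∀ v ∈ P, ∃ w, Consec l X v w := by
        intro v hv
        have hvX : v ∈ X := hPX v hv
        have hvtop : v ≠ top := Finset.ne_of_mem_erase hv
        have hvlt : l v < l top :=
          lt_of_le_of_ne (htop v (hXA hvX)) (fun h => hvtop (hlinj _ _ h))
        obtain ⟨w, hwmem, hwmin⟩ := Finset.exists_min_image
          (X.filter (fun y => l v < l y)) l ⟨top, Finset.mem_filter.mpr ⟨htopX, hvlt⟩⟩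
        refine ⟨w, hvX, (Finset.mem_filter.mp hwmem).1, (Finset.mem_filter.mp hwmem).2, ?_⟩
        intro u hu h
        exact absurd (hwmin u (Finset.mem_filter.mpr ⟨hu, h.1⟩)) (not_le.mpr h.2)
      choose nxt hnxt using hnxt0
      -- bags
      have hbag : ∀ v (hv : v ∈ P), ∃ S' : Finset V,
          S' ⊆ A.filter (fun u => l v < l u ∧ l u < l (nxt v hv)) ∧ SnakeOn G l S' ∧
          (A.filter (fun u => l v < l u ∧ l u < l (nxt v hv))).card ≤ S'.card ^ (k - 1) := by
        intro v hv
        set w := nxt v hv with hw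
        set B := A.filter (fun u => l v < l u ∧ l u < l w) with hB
        have hcons := hnxt v hv
        have hvA : v ∈ A := hXA (hPX v hv)
        have hwX : w ∈ X := hcons.2.1
        have hwA : w ∈ A := hXA hwX
        have hadjvw : G.Adj v w := (hchain.2 v w hcons).1
        have hvw : l v < l w := hcons.2.2.1
        have hrvw : l w ≤ r v := ((hadj v w (G.ne_of_adj hadjvw)).mp hadjvw).2
        apply ih B
        · -- clique bound k on B
          intro C hCB hC
          rcases C.eq_empty_or_nonempty with rfl | hCne
          · simp
          obtain ⟨c0, hc0C, hc0max⟩ := Finset.exists_max_image C l hCne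
          have hCmem : ∀ c ∈ C, c ∈ A ∧ l v < l c ∧ l c < l w := by
            intro c hc
            have := Finset.mem_filter.mp (hCB hc)
            exact ⟨this.1, this.2.1, this.2.2⟩
          by_cases hcase : l c0 ≤ r v
          · -- extend by v
            have hvC : v ∉ C := fun h => absurd (hCmem v h).2.1 (lt_irrefl _)
            have hclique' : G.IsClique ↑(insert v C) := by
              rw [Finset.coe_insert]
              refine hC.insert (fun b hb hne => ?_)
              have hbC := Finset.mem_coe.mp hb
              have hb' := hCmem b hbC
              refine (hadj v b hne).mpr ⟨le_trans (le_of_lt hb'.2.1) (hlr b), ?_⟩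
              exact le_trans (hc0max b hbC) hcase
            have hsub : insert v C ⊆ A :=
              Finset.insert_subset hvA (fun c hc => (hCmem c hc).1)
            have := hclq _ hsub hclique'
            rw [Finset.card_insert_of_notMem hvC] at this
            omega
          · -- extend by w
            push_neg at hcase
            have hwC : w ∉ C := fun h => absurd (hCmem w h).2.2 (lt_irrefl _)
            have hclique' : G.IsClique ↑(insert w C) := by
              rw [Finset.coe_insert]
              refine hC.insert (fun b hb hne => ?_)
              have hbC := Finset.mem_coe.mp hb
              have hb' := hCmem b hbC
              have hrb : l c0 ≤ r b := by
                by_cases hbc0 : b = c0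
                · subst hbc0; exact hlr b
                · have := hC (Finset.mem_coe.mpr hbC) (Finset.mem_coe.mpr hc0C) hbc0
                  exact ((hadj b c0 hbc0).mp this).2
              refine (hadj w b hne).mpr ⟨le_trans hrvw (le_trans (le_of_lt hcase) hrb),
                le_trans (le_of_lt hb'.2.2) (hlr w)⟩
            have hsub : insert w C ⊆ A :=
              Finset.insert_subset hwA (fun c hc => (hCmem c hc).1)
            have := hclq _ hsub hclique'
            rw [Finset.card_insert_of_notMem hwC] at this
            omega
        · -- ConsecAdjOn on B
          intro u hu z hz hlt hbtw
          have hu' := Finset.mem_filter.mp (Finset.mem_coe.mp hu)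
          have hz' := Finset.mem_filter.mp (Finset.mem_coe.mp hz)
          apply hA u (Finset.mem_coe.mpr hu'.1) z (Finset.mem_coe.mpr hz'.1) hlt
          intro y hy h
          have hyB : y ∈ B := Finset.mem_filter.mpr ⟨Finset.mem_coe.mp hy,
            lt_trans hu'.2.1 h.1, lt_trans h.2 hz'.2.2⟩
          exact hbtw y (Finset.mem_coe.mpr hyB) h
      choose F hF1 hF2 hF3 using hbag
      set m : ℕ := P.attach.sup (fun v => (F v.1 v.2).card) with hm
      -- coverage
      have hcover : A ⊆ X ∪ P.attach.biUnion
          (fun v => A.filter (fun u => l v.1 < l u ∧ l u < l (nxt v.1 v.2))) := by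
        intro a ha
        by_cases haX : a ∈ X
        · exact Finset.mem_union_left _ haX
        have hbota : l bot < l a :=
          lt_of_le_of_ne (hbot a ha) (fun h => haX ((hlinj _ _ h) ▸ hbotX))
        obtain ⟨v, hvmem, hvmax⟩ := Finset.exists_max_image
          (X.filter (fun y => l y < l a)) l ⟨bot, Finset.mem_filter.mpr ⟨hbotX, hbota⟩⟩
        have hvX : v ∈ X := (Finset.mem_filter.mp hvmem).1
        have hva : l v < l a := (Finset.mem_filter.mp hvmem).2
        have hvtop : v ≠ top := by
          intro h
          subst h
          exact absurd (htop a ha) (not_le.mpr hva)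
        have hvP : v ∈ P := Finset.mem_erase.mpr ⟨hvtop, hvX⟩
        have hcons := hnxt v hvP
        have haw : l a < l (nxt v hvP) := by
          rcases lt_trichotomy (l a) (l (nxt v hvP)) with h | h | h
          · exact h
          · exact absurd (hlinj _ _ h ▸ hcons.2.1 : a ∈ X) haX
          · have : nxt v hvP ∈ X.filter (fun y => l y < l a) :=
              Finset.mem_filter.mpr ⟨hcons.2.1, h⟩
            exact absurd (hvmax _ this) (not_le.mpr hcons.2.2.1)
        refine Finset.mem_union_right _ (Finset.mem_biUnion.mpr ⟨⟨v, hvP⟩,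
          Finset.mem_attach _ _, Finset.mem_filter.mpr ⟨ha, hva, haw⟩⟩)
      have hXne : X.Nonempty := ⟨bot, hbotX⟩
      have hX1 : 1 ≤ X.card := Finset.card_pos.mpr hXne
      have hPcard : P.card = X.card - 1 := Finset.card_erase_of_mem htopX
      have hcount : A.card ≤ X.card + P.card * m ^ (k - 1) := by
        calc A.card ≤ (X ∪ P.attach.biUnion
            (fun v => A.filter (fun u => l v.1 < l u ∧ l u < l (nxt v.1 v.2)))).card :=
              Finset.card_le_card hcover
          _ ≤ X.card + (P.attach.biUnion
              (fun v => A.filter (fun u => l v.1 < l u ∧ l u < l (nxt v.1 v.2)))).card :=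
              Finset.card_union_le _ _
          _ ≤ X.card + ∑ v ∈ P.attach,
              (A.filter (fun u => l v.1 < l u ∧ l u < l (nxt v.1 v.2))).card := by
              exact add_le_add_right (Finset.card_biUnion_le) _
          _ ≤ X.card + ∑ _v ∈ P.attach, m ^ (k - 1) := by
              refine add_le_add_right (Finset.sum_le_sum (fun v _ => ?_)) _
              refine le_trans (hF3 v.1 v.2) (Nat.pow_le_pow_left ?_ _)
              rw [hm]
              exact Finset.le_sup (f := fun v : {x // x ∈ P} => (F v.1 v.2).card)
                (Finset.mem_attach _ v)
          _ = X.card + P.card * m ^ (k - 1) := by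
              rw [Finset.sum_const, Finset.card_attach, smul_eq_mul]
      have hexp : k - 1 + 1 = (k + 1) - 1 := by omega
      by_cases hms : m ≤ X.card
      · refine ⟨X, hXA, snake_of_chain G l hchain, ?_⟩
        rw [← hexp]
        refine le_trans hcount ?_
        rw [hPcard]
        exact arith X.card X.card m (k - 1) hX1 (le_refl _) hms (by omega)
      · push_neg at hms
        have hPne : P.attach.Nonempty := by
          rcases Finset.eq_empty_or_nonempty P.attach with h | h
          · exfalso
            rw [hm, h, Finset.sup_empty] at hms
            simp at hms
          · exact h
        obtain ⟨v, _, hveq⟩ := Finset.exists_mem_eq_sup _ hPne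
          (fun v : {x // x ∈ P} => (F v.1 v.2).card)
        rw [← hm] at hveq
        refine ⟨F v.1 v.2, ?_, hF2 v.1 v.2, ?_⟩
        · exact le_trans (hF1 v.1 v.2) (Finset.filter_subset _ _)
        · rw [← hveq, ← hexp]
          refine le_trans hcount ?_
          rw [hPcard]
          exact arith m X.card m (k - 1) (by omega) (le_of_lt hms) (le_refl _) (by omega)

end IntervalAux

/-- Lemma 10 (paper): an interval graph on `n` vertices with maximum clique size
`k ≥ 2`, in which each vertex of the left ordering is adjacent to its successor,
contains an induced subgraph (given by its vertex set `S`) on at least `n^(1/(k-1))`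
vertices in which each vertex is adjacent to its successor in the induced left
ordering and no vertex is simplicial except the first and the last. -/
theorem interval_no_simplicial_subgraph {V : Type} [Fintype V]
    (G : SimpleGraph V) (l r : V → ℝ) (hrep : IsIntervalRep G l r)
    (n : ℕ) (hn : Fintype.card V = n)
    (k : ℕ) (hk : 2 ≤ k) (hmax : MaxCliqueSize G k)
    (hconsec : ConsecAdjOn G l Set.univ) :
    ∃ S : Set V,
      (n : ℝ) ^ ((1 : ℝ) / ((k : ℝ) - 1)) ≤ (S.ncard : ℝ) ∧
      ConsecAdjOn G l S ∧
      ∀ x : ↥S, (∃ u ∈ S, l u < l (x : V)) → (∃ u ∈ S, l (x : V) < l u) →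
        ¬ (G.induce S).IsClique ((G.induce S).neighborSet x) := by
  classical
  obtain ⟨S, -, hsnake, hcard⟩ := IntervalAux.main G l r hrep k (by omega) Finset.univ
    (fun C _ hC => hmax.2 C.card C ⟨hC, rfl⟩)
    (by rw [Finset.coe_univ]; exact hconsec)
  refine ⟨↑S, ?_, hsnake.1, ?_⟩
  · rw [Set.ncard_coe_finset]
    have hn' : (n : ℝ) ≤ (S.card : ℝ) ^ ((k : ℝ) - 1) := by
      have h1 : (n : ℝ) ≤ (S.card : ℝ) ^ ((k - 1 : ℕ)) := by
        have h0 : n ≤ S.card ^ (k - 1) := by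
          rw [← hn, ← Finset.card_univ]
          exact hcard
        exact_mod_cast h0
      rw [← Real.rpow_natCast (S.card : ℝ) (k - 1)] at h1
      have hcast : ((k - 1 : ℕ) : ℝ) = (k : ℝ) - 1 := by
        rw [Nat.cast_sub (by omega : 1 ≤ k)]
        norm_num
      rwa [hcast] at h1
    have hkpos : (0 : ℝ) < (k : ℝ) - 1 := by
      have : (2 : ℝ) ≤ (k : ℝ) := by exact_mod_cast hk
      linarith
    calc (n : ℝ) ^ ((1 : ℝ) / ((k : ℝ) - 1))
        ≤ ((S.card : ℝ) ^ ((k : ℝ) - 1)) ^ ((1 : ℝ) / ((k : ℝ) - 1)) :=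
          Real.rpow_le_rpow (Nat.cast_nonneg n) hn' (by positivity)
      _ = (S.card : ℝ) := by
          rw [← Real.rpow_mul (Nat.cast_nonneg _), mul_one_div, div_self (ne_of_gt hkpos),
            Real.rpow_one]
  · intro x hpred hsucc hclq
    obtain ⟨p0, hp0S, hp0lt⟩ := hpred
    obtain ⟨s0, hs0S, hs0lt⟩ := hsucc
    obtain ⟨p, hpmem, hpmax⟩ := Finset.exists_max_image
      (S.filter (fun u => l u < l (x : V))) l
      ⟨p0, Finset.mem_filter.mpr ⟨Finset.mem_coe.mp hp0S, hp0lt⟩⟩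
    obtain ⟨s, hsmem, hsmin⟩ := Finset.exists_min_image
      (S.filter (fun u => l (x : V) < l u)) l
      ⟨s0, Finset.mem_filter.mpr ⟨Finset.mem_coe.mp hs0S, hs0lt⟩⟩
    have hpS : p ∈ S := (Finset.mem_filter.mp hpmem).1
    have hplt : l p < l (x : V) := (Finset.mem_filter.mp hpmem).2
    have hsS : s ∈ S := (Finset.mem_filter.mp hsmem).1
    have hslt : l (x : V) < l s := (Finset.mem_filter.mp hsmem).2
    have hxS : (x : V) ∈ S := Finset.mem_coe.mp x.2
    have hc1 : IntervalAux.Consec l S p (x : V) := ⟨hpS, hxS, hplt, fun u hu h =>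
      absurd (hpmax u (Finset.mem_filter.mpr ⟨hu, h.2⟩)) (not_le.mpr h.1)⟩
    have hc2 : IntervalAux.Consec l S (x : V) s := ⟨hxS, hsS, hslt, fun u hu h =>
      absurd (hsmin u (Finset.mem_filter.mpr ⟨hu, h.1⟩)) (not_le.mpr h.2)⟩
    have hnadj : ¬ G.Adj p s := hsnake.2 p (x : V) s hc1 hc2
    have hadjpx : G.Adj p (x : V) := hsnake.1 p (Finset.mem_coe.mpr hpS) (x : V)
      (Finset.mem_coe.mpr hxS) hplt (fun u hu => hc1.2.2.2 u (Finset.mem_coe.mp hu))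
    have hadjxs : G.Adj (x : V) s := hsnake.1 (x : V) (Finset.mem_coe.mpr hxS) s
      (Finset.mem_coe.mpr hsS) hslt (fun u hu => hc2.2.2.2 u (Finset.mem_coe.mp hu))
    have hps : p ≠ s := fun h => absurd (lt_trans hplt hslt) (h ▸ lt_irrefl _)
    have hpmem' : (⟨p, Finset.mem_coe.mpr hpS⟩ : ↥(↑S : Set V)) ∈
        (G.induce ↑S).neighborSet x := hadjpx.symm
    have hsmem' : (⟨s, Finset.mem_coe.mpr hsS⟩ : ↥(↑S : Set V)) ∈
        (G.induce ↑S).neighborSet x := hadjxs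
    exact hnadj (hclq hpmem' hsmem' (fun h => hps (congrArg Subtype.val h)))
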